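/- If C₁ and C₂ are semi-linear subsets of ℕ^d, then the set C₁ - C₂ = {u ∈ ℕ^d | ∃ v ∈ C₂, u + v ∈ C₁} is semi-linear. -/

import Mathlib

/-- A linear subset of `ℕ^d`: all vectors `b₀ + z₁•b₁ + ... + z_ℓ•b_ℓ`. -/
def IsLinear {d : ℕ} (S : Set (Fin d → ℕ)) : Prop :=
  ∃ (b₀ : Fin d → ℕ) (ℓ : ℕ) (b : Fin ℓ → Fin d → ℕ),
    S = {v | ∃ z : Fin ℓ → ℕ, v = b₀ + ∑ i, z i • b i}

/-- A semi-linear subset of `ℕ^d`: a finite union of linear sets. -/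
def IsSemilinear {d : ℕ} (S : Set (Fin d → ℕ)) : Prop :=
  ∃ (n : ℕ) (T : Fin n → Set (Fin d → ℕ)), (∀ i, IsLinear (T i)) ∧ S = ⋃ i, T i

/-- The number of input-consuming steps among the first `i` steps. -/
def readCount (reads : ℕ → Bool) (i : ℕ) : ℕ :=
  ((Finset.range i).filter (fun j => reads j = true)).card

/-- A run of an ε-free vector-labeled automaton on the infinite word `α`:
`p` is the state sequence, `v i` the vector of the `i`-th transition. -/
def IsRun {Q Sig : Type} {d : ℕ} (q0 : Q) (Δ : Set (Q × Sig × (Fin d → ℕ) × Q))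
    (α : ℕ → Sig) (p : ℕ → Q) (v : ℕ → Fin d → ℕ) : Prop :=
  p 0 = q0 ∧ ∀ i, (p i, α i, v i, p (i + 1)) ∈ Δ

/-- A run of an automaton with ε-transitions `E` on the infinite word `α`;
`reads i = true` iff the `i`-th transition consumes an input symbol, and
infinitely many transitions must consume a symbol. -/
def IsEpsRun {Q Sig : Type} {d : ℕ} (q0 : Q) (Δ : Set (Q × Sig × (Fin d → ℕ) × Q))
    (E : Set (Q × (Fin d → ℕ) × Q)) (α : ℕ → Sig) (p : ℕ → Q) (v : ℕ → Fin d → ℕ)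
    (reads : ℕ → Bool) : Prop :=
  p 0 = q0 ∧ (∀ N, ∃ i, N ≤ i ∧ reads i = true) ∧
    ∀ i, if reads i then (p i, α (readCount reads i), v i, p (i + 1)) ∈ Δ
      else (p i, v i, p (i + 1)) ∈ E

/-- Prefix-acceptance: infinitely many positions `n ≥ 1` where the current state is
accepting and the accumulated vector sum lies in the (state-dependent) semi-linear set. -/
def PrefixCond {Q : Type} {d : ℕ} (F : Set Q) (C : Q → Set (Fin d → ℕ))
    (p : ℕ → Q) (v : ℕ → Fin d → ℕ) : Prop :=
  ∀ N, ∃ n, N ≤ n ∧ 1 ≤ n ∧ p n ∈ F ∧ (∑ j ∈ Finset.range n, v j) ∈ C (p n)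

/-- Weak reset-acceptance: there are infinitely many reset positions `0 = k 0 < k 1 < ...`
such that each `p (k (i+1))` is accepting and the vector sum between consecutive
reset positions lies in the corresponding semi-linear set. -/
def WeakCond {Q : Type} {d : ℕ} (F : Set Q) (C : Q → Set (Fin d → ℕ))
    (p : ℕ → Q) (v : ℕ → Fin d → ℕ) : Prop :=
  ∃ k : ℕ → ℕ, k 0 = 0 ∧ StrictMono k ∧
    ∀ i, p (k (i + 1)) ∈ F ∧
      (∑ j ∈ Finset.Ico (k i) (k (i + 1)), v j) ∈ C (p (k (i + 1)))

/-- Strong reset-acceptance: `k 1 < k 2 < ...` enumerates *all* positions `n ≥ 1` of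
accepting states (so there are infinitely many), and the vector sum between any two
consecutive such positions (with `k 0 = 0`) lies in the corresponding semi-linear set. -/
def StrongCond {Q : Type} {d : ℕ} (F : Set Q) (C : Q → Set (Fin d → ℕ))
    (p : ℕ → Q) (v : ℕ → Fin d → ℕ) : Prop :=
  ∃ k : ℕ → ℕ, k 0 = 0 ∧ StrictMono k ∧
    (∀ n, 1 ≤ n → (p n ∈ F ↔ ∃ i, 1 ≤ i ∧ k i = n)) ∧
    ∀ i, (∑ j ∈ Finset.Ico (k i) (k (i + 1)), v j) ∈ C (p (k (i + 1)))

/-- A Parikh(-Büchi) automaton of dimension `d` (also used as a Parikh automaton on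
finite words): finitely many states, vector-labeled transitions, a semi-linear set `C`. -/
structure PBA (Sig : Type) (d : ℕ) where
  Q : Type
  fin : Fintype Q
  q0 : Q
  Δ : Set (Q × Sig × (Fin d → ℕ) × Q)
  F : Set Q
  C : Set (Fin d → ℕ)

attribute [instance] PBA.fin

/-- `P_ω(A)`: the ω-language recognized under prefix-acceptance (PPBA). -/
def PBA.PrefixLang {Sig d} (A : PBA Sig d) : Set (ℕ → Sig) :=
  {α | ∃ p v, IsRun A.q0 A.Δ α p v ∧ PrefixCond A.F (fun _ => A.C) p v}

/-- `W_ω(A)`: the ω-language recognized under weak reset-acceptance (WPBA). -/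
def PBA.WeakLang {Sig d} (A : PBA Sig d) : Set (ℕ → Sig) :=
  {α | ∃ p v, IsRun A.q0 A.Δ α p v ∧ WeakCond A.F (fun _ => A.C) p v}

/-- `S_ω(A)`: the ω-language recognized under strong reset-acceptance (SPBA). -/
def PBA.StrongLang {Sig d} (A : PBA Sig d) : Set (ℕ → Sig) :=
  {α | ∃ p v, IsRun A.q0 A.Δ α p v ∧ StrongCond A.F (fun _ => A.C) p v}

/-- Acceptance of a finite word by a Parikh automaton. -/
def PBA.FinAccepts {Sig d} (A : PBA Sig d) (w : List Sig) : Prop :=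
  ∃ (p : ℕ → A.Q) (v : ℕ → Fin d → ℕ),
    p 0 = A.q0 ∧ (∀ i : Fin w.length, (p i, w.get i, v i, p (i + 1)) ∈ A.Δ) ∧
    p w.length ∈ A.F ∧ (∑ j ∈ Finset.range w.length, v j) ∈ A.C

/-- `L(A)`: the language of finite words recognized by a Parikh automaton. -/
def PBA.FinLang {Sig d} (A : PBA Sig d) : Set (List Sig) := {w | A.FinAccepts w}

/-- A Parikh-Büchi automaton with ε-transitions. -/
structure EpsPBA (Sig : Type) (d : ℕ) where
  Q : Type
  fin : Fintype Q
  q0 : Q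
  Δ : Set (Q × Sig × (Fin d → ℕ) × Q)
  E : Set (Q × (Fin d → ℕ) × Q)
  F : Set Q
  C : Set (Fin d → ℕ)

attribute [instance] EpsPBA.fin

def EpsPBA.PrefixLang {Sig d} (A : EpsPBA Sig d) : Set (ℕ → Sig) :=
  {α | ∃ p v reads, IsEpsRun A.q0 A.Δ A.E α p v reads ∧ PrefixCond A.F (fun _ => A.C) p v}

def EpsPBA.WeakLang {Sig d} (A : EpsPBA Sig d) : Set (ℕ → Sig) :=
  {α | ∃ p v reads, IsEpsRun A.q0 A.Δ A.E α p v reads ∧ WeakCond A.F (fun _ => A.C) p v}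

def EpsPBA.StrongLang {Sig d} (A : EpsPBA Sig d) : Set (ℕ → Sig) :=
  {α | ∃ p v reads, IsEpsRun A.q0 A.Δ A.E α p v reads ∧ StrongCond A.F (fun _ => A.C) p v}

/-- A Multi-PBA: every (accepting) state carries its own semi-linear set. -/
structure MPBA (Sig : Type) (d : ℕ) where
  Q : Type
  fin : Fintype Q
  q0 : Q
  Δ : Set (Q × Sig × (Fin d → ℕ) × Q)
  F : Set Q
  C : Q → Set (Fin d → ℕ)

attribute [instance] MPBA.fin

def MPBA.PrefixLang {Sig d} (A : MPBA Sig d) : Set (ℕ → Sig) :=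
  {α | ∃ p v, IsRun A.q0 A.Δ α p v ∧ PrefixCond A.F A.C p v}

/-- A Multi-PBA with ε-transitions. -/
structure EpsMPBA (Sig : Type) (d : ℕ) where
  Q : Type
  fin : Fintype Q
  q0 : Q
  Δ : Set (Q × Sig × (Fin d → ℕ) × Q)
  E : Set (Q × (Fin d → ℕ) × Q)
  F : Set Q
  C : Q → Set (Fin d → ℕ)

attribute [instance] EpsMPBA.fin

def EpsMPBA.StrongLang {Sig d} (A : EpsMPBA Sig d) : Set (ℕ → Sig) :=
  {α | ∃ p v reads, IsEpsRun A.q0 A.Δ A.E α p v reads ∧ StrongCond A.F A.C p v}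

/-- A language of finite words is Parikh-recognizable. -/
def ParikhRec {Sig : Type} (L : Set (List Sig)) : Prop :=
  ∃ d, ∃ A : PBA Sig d, IsSemilinear A.C ∧ A.FinLang = L

/-- An ω-language is PPBA-recognizable. -/
def PPBARec {Sig : Type} (L : Set (ℕ → Sig)) : Prop :=
  ∃ d, ∃ A : PBA Sig d, IsSemilinear A.C ∧ A.PrefixLang = L

/-- An ω-language is SPBA-recognizable. -/
def SPBARec {Sig : Type} (L : Set (ℕ → Sig)) : Prop :=
  ∃ d, ∃ A : PBA Sig d, IsSemilinear A.C ∧ A.StrongLang = L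

/-- Concatenation of a language of finite words with an ω-language. -/
def CatLang {Sig : Type} (L₁ : Set (List Sig)) (L₂ : Set (ℕ → Sig)) : Set (ℕ → Sig) :=
  {α | ∃ u ∈ L₁, ∃ β ∈ L₂,
    (∀ i : Fin u.length, α i = u.get i) ∧ ∀ n, β n = α (u.length + n)}

/-- `α` is the concatenation `w 0 ++ w 1 ++ w 2 ++ ⋯` of the finite words `w i`. -/
def IsOmegaConcat {Sig : Type} (w : ℕ → List Sig) (α : ℕ → Sig) : Prop :=
  ∀ n : ℕ, ∀ i : Fin (((List.range n).map w).flatten.length),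
    ((List.range n).map w).flatten.get i = α i

/-- The ω-power `L^ω = {w₁w₂w₃⋯ ∣ w_i ∈ L ∖ {ε}}`. -/
def OmegaPower {Sig : Type} (L : Set (List Sig)) : Set (ℕ → Sig) :=
  {α | ∃ w : ℕ → List Sig, (∀ i, w i ∈ L) ∧ (∀ i, w i ≠ []) ∧ IsOmegaConcat w α}

/-- Kleene star of a set of finite words. -/
def ListStar {Sig : Type} (L : Set (List Sig)) : Set (List Sig) :=
  {w | ∃ ws : List (List Sig), (∀ u ∈ ws, u ∈ L) ∧ w = ws.flatten}

/-- A (nondeterministic) Büchi automaton. -/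
structure BuchiNFA (Sig : Type) where
  Q : Type
  fin : Fintype Q
  q0 : Q
  Δ : Set (Q × Sig × Q)
  F : Set Q

attribute [instance] BuchiNFA.fin

def BuchiNFA.Lang {Sig} (B : BuchiNFA Sig) : Set (ℕ → Sig) :=
  {α | ∃ p : ℕ → B.Q, p 0 = B.q0 ∧ (∀ i, (p i, α i, p (i + 1)) ∈ B.Δ) ∧
    ∀ N, ∃ n, N ≤ n ∧ p n ∈ B.F}

/-- An ω-language is ω-regular if it is recognized by a Büchi automaton. -/
def OmegaRegular {Sig : Type} (R : Set (ℕ → Sig)) : Prop := ∃ B : BuchiNFA Sig, B.Lang = R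

/-- A blind `k`-counter machine: transitions are labeled by a letter or ε (`Option Sig`)
and an integer vector. -/
structure CM (Sig : Type) (k : ℕ) where
  Q : Type
  fin : Fintype Q
  q0 : Q
  Δ : Set (Q × Option Sig × (Fin k → ℤ) × Q)
  F : Set Q

attribute [instance] CM.fin

/-- The ω-language of a blind counter machine: some run reads every symbol of `α`
and is infinitely often in an accepting state with all counters equal to `0`. -/
def CM.Lang {Sig k} (M : CM Sig k) : Set (ℕ → Sig) :=
  {α | ∃ (p : ℕ → M.Q) (v : ℕ → Fin k → ℤ) (reads : ℕ → Bool),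
    p 0 = M.q0 ∧ (∀ N, ∃ i, N ≤ i ∧ reads i = true) ∧
    (∀ i, if reads i then (p i, some (α (readCount reads i)), v i, p (i + 1)) ∈ M.Δ
      else (p i, (none : Option Sig), v i, p (i + 1)) ∈ M.Δ) ∧
    ∀ N, ∃ n, N ≤ n ∧ p n ∈ M.F ∧ (∑ j ∈ Finset.range n, v j) = 0}

def IsLinear' {ι : Type} (S : Set (ι → ℕ)) : Prop :=
  ∃ (b₀ : ι → ℕ) (ℓ : ℕ) (b : Fin ℓ → ι → ℕ),
    S = {v | ∃ z : Fin ℓ → ℕ, v = b₀ + ∑ i, z i • b i}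

def IsSemilinear' {ι : Type} (S : Set (ι → ℕ)) : Prop :=
  ∃ (n : ℕ) (T : Fin n → Set (ι → ℕ)), (∀ i, IsLinear' (T i)) ∧ S = ⋃ i, T i

section Min
variable {ι : Type} [Fintype ι]

lemma pi_nat_isPWO (S : Set (ι → ℕ)) : S.IsPWO :=
  Set.isPWO_of_wellQuasiOrderedLE S

lemma minOf_finite (S : Set (ι → ℕ)) :
    {x | x ∈ S ∧ ∀ y ∈ S, y ≤ x → y = x}.Finite := by
  have hac : IsAntichain (· ≤ ·) {x | x ∈ S ∧ ∀ y ∈ S, y ≤ x → y = x} := by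
    intro x hx y hy hne hle
    exact hne (hy.2 _ hx.1 hle)
  exact hac.finite_of_partiallyWellOrderedOn (pi_nat_isPWO _)

lemma exists_min {S : Set (ι → ℕ)} {x : ι → ℕ} (hx : x ∈ S) :
    ∃ m, (m ∈ S ∧ ∀ y ∈ S, y ≤ m → y = m) ∧ m ≤ x := by
  set S' : Set (ι → ℕ) := {y | y ∈ S ∧ y ≤ x} with hS'
  have hwf : S'.IsWF := (pi_nat_isPWO S').isWF
  have hne : S'.Nonempty := ⟨x, hx, le_refl x⟩
  refine ⟨hwf.min hne, ⟨(hwf.min_mem hne).1, ?_⟩, (hwf.min_mem hne).2⟩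
  intro y hy hyle
  have hy' : y ∈ S' := ⟨hy, hyle.trans (hwf.min_mem hne).2⟩
  have h2 := hwf.not_lt_min hne hy'
  exact hyle.lt_or_eq.resolve_left h2

end Min

section Sol
variable {ι : Type} [Fintype ι] {β : Type} [AddCommGroup β]

/-- The additive map `x ↦ ∑ i, (x i : ℤ) • a i`. -/
def solHom (a : ι → β) : (ι → ℕ) →+ β where
  toFun x := ∑ i, (x i : ℤ) • a i
  map_zero' := by simp
  map_add' x y := by
    simp only [Pi.add_apply, Nat.cast_add, add_smul]
    exact Finset.sum_add_distrib

lemma solHom_sub (a : ι → β) {x y : ι → ℕ} (h : y ≤ x) :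
    solHom a (x - y) = solHom a x - solHom a y := by
  have hxy : (x - y) + y = x := by
    funext k; exact Nat.sub_add_cancel (h k)
  have := map_add (solHom a) (x - y) y
  rw [hxy] at this
  rw [this]; abel

lemma exists_pos_of_ne_zero {g : ι → ℕ} (hg : g ≠ 0) : 1 ≤ ∑ i, g i := by
  by_contra h
  exact hg (funext fun i => by
    have h0 : ∑ i, g i = 0 := by omega
    have := (Finset.sum_eq_zero_iff).mp h0 i (Finset.mem_univ i)
    simpa using this)

/-- Every solution set of an affine equation over ℕ is semilinear. -/
lemma sol_semilinear (a : ι → β) (c : β) :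
    IsSemilinear' {x : ι → ℕ | solHom a x = c} := by
  classical
  set H : Set (ι → ℕ) := {x | solHom a x = 0} with hH
  set G : Set (ι → ℕ) := {x | (x ∈ H ∧ x ≠ 0) ∧ ∀ y ∈ {x | x ∈ H ∧ x ≠ 0}, y ≤ x → y = x}
    with hG
  have hGfin : G.Finite := minOf_finite _
  set Gf := hGfin.toFinset with hGf
  set ℓ := Gf.card with hl
  set bg : Fin ℓ → (ι → ℕ) := fun i => (Gf.equivFin.symm i : ι → ℕ) with hbg
  have bg_mem : ∀ i, bg i ∈ G := fun i =>
    hGfin.mem_toFinset.mp (by rw [← hGf]; exact (Gf.equivFin.symm i).2)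
  have bg_H : ∀ i, solHom a (bg i) = 0 := fun i => (bg_mem i).1.1
  -- generation of H by bg
  have gen : ∀ N (x : ι → ℕ), (∑ i, x i) ≤ N → solHom a x = 0 →
      ∃ z : Fin ℓ → ℕ, x = ∑ i, z i • bg i := by
    intro N
    induction N with
    | zero =>
      intro x hx _
      refine ⟨0, ?_⟩
      have : x = 0 := funext fun i => by
        have := (Finset.sum_eq_zero_iff).mp (Nat.le_zero.mp hx) i (Finset.mem_univ i)
        simpa using this
      simp [this]
    | succ N ih =>
      intro x hx hx0
      by_cases hxz : x = 0
      · exact ⟨0, by simp [hxz]⟩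
      · obtain ⟨g, hgmin, hgle⟩ := exists_min (S := {x | x ∈ H ∧ x ≠ 0}) ⟨hx0, hxz⟩
        have hgG : g ∈ G := hgmin
        have hgH : solHom a g = 0 := hgmin.1.1
        have hgne : g ≠ 0 := hgmin.1.2
        have hsub : solHom a (x - g) = 0 := by
          rw [solHom_sub a hgle, hx0, hgH, sub_zero]
        have hsums : (∑ i, (x - g) i) + ∑ i, g i = ∑ i, x i := by
          rw [← Finset.sum_add_distrib]
          exact Finset.sum_congr rfl fun i _ => by
            have hki : g i ≤ x i := hgle i
            simp only [Pi.sub_apply]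
            omega
        have hle : (∑ i, (x - g) i) ≤ N := by
          have h1 := exists_pos_of_ne_zero hgne
          omega
        obtain ⟨z, hz⟩ := ih (x - g) hle hsub
        have hgGf : g ∈ Gf := by rw [hGf]; exact hGfin.mem_toFinset.mpr hgG
        obtain ⟨i₀, hi₀⟩ : ∃ i₀, bg i₀ = g :=
          ⟨Gf.equivFin ⟨g, hgGf⟩, by simp [hbg]⟩
        refine ⟨fun i => if i = i₀ then z i + 1 else z i, ?_⟩
        have hsplit : ∀ i : Fin ℓ, (if i = i₀ then z i + 1 else z i) • bg i
            = z i • bg i + (if i = i₀ then bg i else 0) := fun i => by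
          by_cases h : i = i₀ <;> simp [h, add_smul, one_smul]
        calc x = (x - g) + g := by
                funext k; have hk : g k ≤ x k := hgle k
                simp only [Pi.sub_apply, Pi.add_apply]; omega
          _ = (∑ i, z i • bg i) + bg i₀ := by rw [hz, hi₀]
          _ = ∑ i, (if i = i₀ then z i + 1 else z i) • bg i := by
                simp only [hsplit, Finset.sum_add_distrib, Finset.sum_ite_eq',
                  Finset.mem_univ, if_true]
  -- combinations lie in H
  have comb : ∀ z : Fin ℓ → ℕ, solHom a (∑ i, z i • bg i) = 0 := fun z => by
    rw [map_sum]
    exact Finset.sum_eq_zero fun i _ => by rw [AddMonoidHom.map_nsmul, bg_H, smul_zero]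
  -- minimal elements of the solution set
  set P : Set (ι → ℕ) := {x | solHom a x = c} with hP
  set M : Set (ι → ℕ) := {x | x ∈ P ∧ ∀ y ∈ P, y ≤ x → y = x} with hM
  have hMfin : M.Finite := minOf_finite _
  set Mf := hMfin.toFinset with hMf
  refine ⟨Mf.card, fun j => {v | ∃ z : Fin ℓ → ℕ,
    v = (Mf.equivFin.symm j : ι → ℕ) + ∑ i, z i • bg i}, fun j => ⟨_, ℓ, bg, rfl⟩, ?_⟩
  ext x
  simp only [Set.mem_setOf_eq, Set.mem_iUnion]
  constructor
  · intro hx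
    obtain ⟨m, hmmin, hmle⟩ := exists_min (S := P) hx
    have hmM : m ∈ Mf := by simpa [hMf, Set.Finite.mem_toFinset, hM] using hmmin
    have hsub : solHom a (x - m) = 0 := by
      rw [solHom_sub a hmle, hx, hmmin.1, sub_self]
    obtain ⟨z, hz⟩ := gen (∑ i, (x - m) i) (x - m) le_rfl hsub
    refine ⟨Mf.equivFin ⟨m, hmM⟩, z, ?_⟩
    simp only [Equiv.symm_apply_apply]
    rw [← hz]
    funext k; have hk : m k ≤ x k := hmle k
    simp only [Pi.sub_apply, Pi.add_apply]; omega
  · rintro ⟨j, z, rfl⟩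
    have hm : (Mf.equivFin.symm j : ι → ℕ) ∈ P :=
      (hMfin.mem_toFinset.mp (Mf.equivFin.symm j).2).1
    show solHom a _ = c
    rw [map_add, hm, comb, add_zero]

end Sol

section Assemble

/-- Reindexing/projection as an additive monoid hom. -/
def projHom {ι κ : Type} (f : κ → ι) : (ι → ℕ) →+ (κ → ℕ) where
  toFun x := fun k => x (f k)
  map_zero' := rfl
  map_add' _ _ := rfl

lemma isSemilinear'_image {ι κ : Type} (π : (ι → ℕ) →+ (κ → ℕ)) {S : Set (ι → ℕ)}
    (h : IsSemilinear' S) : IsSemilinear' (π '' S) := by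
  obtain ⟨n, T, hT, rfl⟩ := h
  refine ⟨n, fun i => π '' T i, fun i => ?_, by rw [Set.image_iUnion]⟩
  obtain ⟨b₀, ℓ, b, hTi⟩ := hT i
  refine ⟨π b₀, ℓ, fun i => π (b i), ?_⟩
  show π '' T i = _
  rw [hTi]
  ext w
  constructor
  · rintro ⟨v, ⟨z, rfl⟩, rfl⟩
    refine ⟨z, ?_⟩
    rw [map_add, map_sum]
    congr 1
    exact Finset.sum_congr rfl fun j _ => map_nsmul π (z j) (b j)
  · rintro ⟨z, rfl⟩
    refine ⟨b₀ + ∑ i, z i • b i, ⟨z, rfl⟩, ?_⟩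
    rw [map_add, map_sum]
    congr 1
    exact Finset.sum_congr rfl fun j _ => map_nsmul π (z j) (b j)

lemma isSemilinear'_iUnion {ι κ : Type} [Fintype κ] {S : κ → Set (ι → ℕ)}
    (h : ∀ k, IsSemilinear' (S k)) : IsSemilinear' (⋃ k, S k) := by
  choose n T hT hU using h
  classical
  let σ := Σ k : κ, Fin (n k)
  refine ⟨Fintype.card σ,
    fun i => T ((Fintype.equivFin σ).symm i).1 ((Fintype.equivFin σ).symm i).2,
    fun i => hT _ _, ?_⟩
  ext x
  simp only [Set.mem_iUnion]
  constructor
  · rintro ⟨k, hk⟩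
    rw [hU k] at hk
    obtain ⟨j, hj⟩ := Set.mem_iUnion.mp hk
    refine ⟨Fintype.equivFin σ ⟨k, j⟩, ?_⟩
    have e : (Fintype.equivFin σ).symm ((Fintype.equivFin σ) ⟨k, j⟩) = ⟨k, j⟩ :=
      Equiv.symm_apply_apply _ _
    rw [e]
    exact hj
  · rintro ⟨i, hi⟩
    refine ⟨((Fintype.equivFin σ).symm i).1, ?_⟩
    rw [hU]
    exact Set.mem_iUnion.mpr ⟨_, hi⟩

lemma linear_sub {d : ℕ} (b₀ : Fin d → ℕ) (ℓ₁ : ℕ) (b : Fin ℓ₁ → Fin d → ℕ)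
    (c₀ : Fin d → ℕ) (ℓ₂ : ℕ) (cg : Fin ℓ₂ → Fin d → ℕ) :
    IsSemilinear' {u : Fin d → ℕ |
      ∃ v ∈ {v | ∃ z : Fin ℓ₂ → ℕ, v = c₀ + ∑ i, z i • cg i},
      u + v ∈ {v | ∃ z : Fin ℓ₁ → ℕ, v = b₀ + ∑ i, z i • b i}} := by
  classical
  set a : (Fin d ⊕ (Fin ℓ₂ ⊕ Fin ℓ₁)) → (Fin d → ℤ) :=
    Sum.elim (fun k => Pi.single k 1)
      (Sum.elim (fun j k' => (cg j k' : ℤ)) (fun i k' => -(b i k' : ℤ))) with ha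
  set cst : Fin d → ℤ := fun k => (b₀ k : ℤ) - (c₀ k : ℤ) with hcst
  set π : ((Fin d ⊕ (Fin ℓ₂ ⊕ Fin ℓ₁)) → ℕ) →+ (Fin d → ℕ) := projHom Sum.inl with hπ
  have hsol : ∀ (x : (Fin d ⊕ (Fin ℓ₂ ⊕ Fin ℓ₁)) → ℕ) (k : Fin d),
      solHom a x k = (x (Sum.inl k) : ℤ)
        + (∑ j, (x (Sum.inr (Sum.inl j)) : ℤ) * cg j k)
        - ∑ i, (x (Sum.inr (Sum.inr i)) : ℤ) * b i k := by
    intro x k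
    show (∑ i, (x i : ℤ) • a i) k = _
    rw [Finset.sum_apply]
    simp only [Pi.smul_apply, smul_eq_mul, Fintype.sum_sum_type, ha, Sum.elim_inl,
      Sum.elim_inr, Pi.single_apply, mul_ite, mul_one, mul_zero, Finset.sum_ite_eq,
      Finset.mem_univ, if_true, mul_neg]
    rw [Finset.sum_neg_distrib]
    ring
  have key : ∀ x : (Fin d ⊕ (Fin ℓ₂ ⊕ Fin ℓ₁)) → ℕ, solHom a x = cst ↔
      π x + (c₀ + ∑ j, x (Sum.inr (Sum.inl j)) • cg j)
        = b₀ + ∑ i, x (Sum.inr (Sum.inr i)) • b i := by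
    intro x
    rw [funext_iff, funext_iff]
    apply forall_congr'
    intro k
    rw [hsol]
    simp only [Pi.add_apply, Finset.sum_apply, Pi.smul_apply, smul_eq_mul, hcst, hπ, projHom,
      AddMonoidHom.coe_mk, ZeroHom.coe_mk]
    rw [show (x (Sum.inl k) + (c₀ k + ∑ j, x (Sum.inr (Sum.inl j)) * cg j k)
        = b₀ k + ∑ i, x (Sum.inr (Sum.inr i)) * b i k)
      ↔ (((x (Sum.inl k) + (c₀ k + ∑ j, x (Sum.inr (Sum.inl j)) * cg j k) : ℕ) : ℤ)
        = ((b₀ k + ∑ i, x (Sum.inr (Sum.inr i)) * b i k : ℕ) : ℤ)) from by exact_mod_cast Iff.rfl]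
    push_cast
    constructor <;> intro h <;> linarith
  have hset : {u : Fin d → ℕ |
      ∃ v ∈ {v | ∃ z : Fin ℓ₂ → ℕ, v = c₀ + ∑ i, z i • cg i},
      u + v ∈ {v | ∃ z : Fin ℓ₁ → ℕ, v = b₀ + ∑ i, z i • b i}}
      = π '' {x | solHom a x = cst} := by
    ext u
    constructor
    · rintro ⟨v, ⟨y, rfl⟩, z, huv⟩
      refine ⟨Sum.elim u (Sum.elim y z), ?_, ?_⟩
      · rw [Set.mem_setOf_eq, key]
        exact huv
      · funext k; rfl
    · rintro ⟨x, hx, rfl⟩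
      rw [Set.mem_setOf_eq, key] at hx
      exact ⟨c₀ + ∑ j, x (Sum.inr (Sum.inl j)) • cg j,
        ⟨fun j => x (Sum.inr (Sum.inl j)), rfl⟩,
        fun i => x (Sum.inr (Sum.inr i)), hx⟩
  rw [hset]
  exact isSemilinear'_image π (sol_semilinear a cst)

end Assemble

/-- If `C₁` and `C₂` are semi-linear subsets of `ℕ^d`, then
`C₁ - C₂ = {u ∣ ∃ v ∈ C₂, u + v ∈ C₁}` is semi-linear. -/
theorem semilinear_sub {d : ℕ} (C₁ C₂ : Set (Fin d → ℕ))
    (h₁ : IsSemilinear C₁) (h₂ : IsSemilinear C₂) :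
    IsSemilinear {u : Fin d → ℕ | ∃ v ∈ C₂, u + v ∈ C₁} := by
  obtain ⟨n₁, T₁, hT₁, rfl⟩ := h₁
  obtain ⟨n₂, T₂, hT₂, rfl⟩ := h₂
  have hset : {u : Fin d → ℕ | ∃ v ∈ ⋃ i, T₂ i, u + v ∈ ⋃ i, T₁ i}
      = ⋃ p : Fin n₁ × Fin n₂, {u | ∃ v ∈ T₂ p.2, u + v ∈ T₁ p.1} := by
    ext u
    simp only [Set.mem_setOf_eq, Set.mem_iUnion]
    constructor
    · rintro ⟨v, ⟨j, hvj⟩, i, hui⟩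
      exact ⟨(i, j), v, hvj, hui⟩
    · rintro ⟨⟨i, j⟩, v, hvj, hui⟩
      exact ⟨v, ⟨j, hvj⟩, i, hui⟩
  rw [hset]
  have hsl : IsSemilinear' (⋃ p : Fin n₁ × Fin n₂, {u | ∃ v ∈ T₂ p.2, u + v ∈ T₁ p.1}) := by
    apply isSemilinear'_iUnion
    rintro ⟨i, j⟩
    obtain ⟨b₀, ℓ₁, b, hb⟩ := hT₁ i
    obtain ⟨c₀, ℓ₂, cg, hc⟩ := hT₂ j
    show IsSemilinear' {u | ∃ v ∈ T₂ j, u + v ∈ T₁ i}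
    rw [hb, hc]
    exact linear_sub b₀ ℓ₁ b c₀ ℓ₂ cg
  obtain ⟨n, T, hT, hU⟩ := hsl
  exact ⟨n, T, fun i => hT i, hU⟩
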